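/- For any integer m ≥ 1 and any sequence c : ℕ → ℤ satisfying c(n+m+1) + c(n) = [c(n+m)]₊ + [c(n+1)]₊ for all n ≥ 0, let Δ(n) := c(n+m) − c(n). If there exists N such that Δ(n) ≥ 1 for all n ≥ N, then there exists N′ such that c(n) ≥ 0 for all n ≥ N′. If instead there exists N such that Δ(n) ≤ −1 for all n ≥ N, then there exists N′ such that c(n) < 0 for all n ≥ N′. -/
import Mathlib

lemma trop_aux_up (m : ℕ) (c : ℕ → ℤ) (N : ℕ)
    (h : ∀ n ≥ N, c n + 1 ≤ c (n + m)) :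
    ∀ k r : ℕ, c (N + r) + k ≤ c (N + r + k * m) := by
  intro k
  induction k with
  | zero => simp
  | succ k ih =>
    intro r
    have h1 := h (N + r + k * m) (by omega)
    have h2 := ih r
    have he : N + r + (k + 1) * m = N + r + k * m + m := by ring
    rw [he]
    push_cast
    omega

lemma trop_aux_down (m : ℕ) (c : ℕ → ℤ) (N : ℕ)
    (h : ∀ n ≥ N, c (n + m) ≤ c n - 1) :
    ∀ k r : ℕ, c (N + r + k * m) ≤ c (N + r) - k := by
  intro k
  induction k with
  | zero => simp
  | succ k ih =>
    intro r
    have h1 := h (N + r + k * m) (by omega)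
    have h2 := ih r
    have he : N + r + (k + 1) * m = N + r + k * m + m := by ring
    rw [he]
    push_cast
    omega

/-- Positivity/negativity properties of the tropical coefficient recurrence: an eventually
positive (resp. negative) difference sequence forces eventual nonnegativity (resp. negativity)
of `c`. -/
theorem tropical_coeff_positivity_negativity (m : ℕ) (hm : 1 ≤ m) (c : ℕ → ℤ)
    (hrec : ∀ n : ℕ, c (n + m + 1) + c n = max 0 (c (n + m)) + max 0 (c (n + 1))) :
    ((∃ N : ℕ, ∀ n ≥ N, 1 ≤ c (n + m) - c n) → ∃ N' : ℕ, ∀ n ≥ N', 0 ≤ c n) ∧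
    ((∃ N : ℕ, ∀ n ≥ N, c (n + m) - c n ≤ -1) → ∃ N' : ℕ, ∀ n ≥ N', c n < 0) := by
  constructor
  · rintro ⟨N, hN⟩
    have hmono : ∀ n ≥ N, c n + 1 ≤ c (n + m) := fun n hn => by
      have := hN n hn; omega
    have key := trop_aux_up m c N hmono
    -- lower bound over one period
    obtain ⟨B, hB⟩ : ∃ B : ℤ, ∀ r < m, B ≤ c (N + r) := by
      refine ⟨((Finset.range m).image fun r => c (N + r)).min' ?_, fun r hr => ?_⟩
      · exact (Finset.nonempty_range_iff.2 (by omega)).image _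
      · exact Finset.min'_le _ _ (Finset.mem_image_of_mem _ (Finset.mem_range.2 hr))
    refine ⟨N + m * (-B).toNat, fun n hn => ?_⟩
    set T := (-B).toNat with hT
    have hd : N ≤ n := by omega
    set d := n - N with hdd
    have hdT : m * T ≤ d := by omega
    have hk : T ≤ d / m := (Nat.le_div_iff_mul_le (by omega)).2
      (by have : T * m = m * T := Nat.mul_comm _ _; omega)
    have hn' : n = N + d % m + (d / m) * m := by
      have h := Nat.div_add_mod d m
      have : (d / m) * m = m * (d / m) := Nat.mul_comm _ _
      omega
    have h1 := key (d / m) (d % m)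
    have h2 := hB (d % m) (Nat.mod_lt _ (by omega))
    have h3 : (B : ℤ) + T ≥ 0 := by
      have : (T : ℤ) = max 0 (-B) := by simp [hT, Int.toNat_of_nonneg]; omega
      omega
    have h4 : (T : ℤ) ≤ (d / m : ℕ) := by exact_mod_cast hk
    rw [hn'] at *
    omega
  · rintro ⟨N, hN⟩
    have hmono : ∀ n ≥ N, c (n + m) ≤ c n - 1 := fun n hn => by
      have := hN n hn; omega
    have key := trop_aux_down m c N hmono
    obtain ⟨B, hB⟩ : ∃ B : ℤ, ∀ r < m, c (N + r) ≤ B := by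
      refine ⟨((Finset.range m).image fun r => c (N + r)).max' ?_, fun r hr => ?_⟩
      · exact (Finset.nonempty_range_iff.2 (by omega)).image _
      · exact Finset.le_max' _ _ (Finset.mem_image_of_mem (fun r => c (N + r)) (Finset.mem_range.2 hr))
    refine ⟨N + m * (B + 1).toNat, fun n hn => ?_⟩
    set T := (B + 1).toNat with hT
    have hd : N ≤ n := by omega
    set d := n - N with hdd
    have hdT : m * T ≤ d := by omega
    have hk : T ≤ d / m := (Nat.le_div_iff_mul_le (by omega)).2
      (by have : T * m = m * T := Nat.mul_comm _ _; omega)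
    have hn' : n = N + d % m + (d / m) * m := by
      have h := Nat.div_add_mod d m
      have : (d / m) * m = m * (d / m) := Nat.mul_comm _ _
      omega
    have h1 := key (d / m) (d % m)
    have h2 := hB (d % m) (Nat.mod_lt _ (by omega))
    have h3 : B + 1 ≤ (T : ℤ) := Int.self_le_toNat _
    have h4 : (T : ℤ) ≤ (d / m : ℕ) := by exact_mod_cast hk
    rw [hn'] at *
    omega
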